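/- Let V be a two-dimensional real inner product space and B : V → V a self-adjoint linear operator with eigenvalues a ≥ b. Then for every nonzero x ∈ V, ‖Bx − μ(x)·x‖² / ‖x‖² = (a − μ(x))·(μ(x) − b); equivalently ϱ(x)² = (a − μ(x))·(μ(x) − b). -/

import Mathlib

open InnerProductGeometry Real RealInnerProductSpace

/-- The Rayleigh quotient `μ(v) = ⟨Bv,v⟩/⟨v,v⟩` of a linear operator `B`. -/
noncomputable def rayQuot {V : Type*} [NormedAddCommGroup V] [InnerProductSpace ℝ V]
    (B : V →ₗ[ℝ] V) (v : V) : ℝ :=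
  ⟪B v, v⟫ / ⟪v, v⟫

/-- The normalized residual `ϱ(v) = ‖Bv − μ(v)v‖/‖v‖`. -/
noncomputable def resQuot {V : Type*} [NormedAddCommGroup V] [InnerProductSpace ℝ V]
    (B : V →ₗ[ℝ] V) (v : V) : ℝ :=
  ‖B v - rayQuot B v • v‖ / ‖v‖

/-- Lemma `lem:temple` (Temple-type identity): on a two-dimensional space, the squared
normalized residual equals `(a − μ(x))(μ(x) − b)` where `a ≥ b` are the eigenvalues. -/
theorem residual_sq_eq_temple
    {V : Type*} [NormedAddCommGroup V] [InnerProductSpace ℝ V] [FiniteDimensional ℝ V]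
    (hdim : Module.finrank ℝ V = 2)
    (B : V →ₗ[ℝ] V) (hB : LinearMap.IsSymmetric B)
    (a b : ℝ) (hab : a ≥ b)
    (e₁ e₂ : V) (he₁ : ‖e₁‖ = 1) (he₂ : ‖e₂‖ = 1) (he₁₂ : ⟪e₁, e₂⟫ = 0)
    (hBe₁ : B e₁ = a • e₁) (hBe₂ : B e₂ = b • e₂)
    (x : V) (hx : x ≠ 0) :
    ‖B x - rayQuot B x • x‖ ^ 2 / ‖x‖ ^ 2 = (a - rayQuot B x) * (rayQuot B x - b) ∧
      resQuot B x ^ 2 = (a - rayQuot B x) * (rayQuot B x - b) := by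
  classical
  have he1i : ⟪e₁, e₁⟫ = 1 := by
    rw [real_inner_self_eq_norm_mul_norm, he₁]; ring
  have he2i : ⟪e₂, e₂⟫ = 1 := by
    rw [real_inner_self_eq_norm_mul_norm, he₂]; ring
  have he₂₁ : ⟪e₂, e₁⟫ = 0 := by rw [real_inner_comm]; exact he₁₂
  set f : Fin 2 → V := fun i => if i = 0 then e₁ else e₂ with hf
  have honb : Orthonormal ℝ f := by
    rw [orthonormal_iff_ite]
    intro i j
    fin_cases i <;> fin_cases j <;> simp [hf, he1i, he2i, he₁₂, he₂₁, he₁, he₂]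
  have hspan : Submodule.span ℝ (Set.range f) = ⊤ :=
    honb.linearIndependent.span_eq_top_of_card_eq_finrank (by simp [hdim])
  have hrange : Set.range f = {e₁, e₂} := by
    ext v; constructor
    · rintro ⟨i, rfl⟩; fin_cases i <;> simp [hf]
    · rintro (rfl | rfl)
      · exact ⟨0, by simp [hf]⟩
      · exact ⟨1, by simp [hf]⟩
  have hxmem : x ∈ Submodule.span ℝ ({e₁, e₂} : Set V) := by
    rw [← hrange, hspan]; trivial
  obtain ⟨r, s, hrs⟩ := Submodule.mem_span_pair.mp hxmem
  have hxx : ⟪x, x⟫ = r ^ 2 + s ^ 2 := by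
    rw [← hrs]
    simp only [inner_add_left, inner_add_right, real_inner_smul_left, real_inner_smul_right,
      he1i, he2i, he₁₂, he₂₁]
    ring
  have hs2 : r ^ 2 + s ^ 2 ≠ 0 := by
    intro h
    have hr : r = 0 := by nlinarith [sq_nonneg r, sq_nonneg s]
    have hs : s = 0 := by nlinarith [sq_nonneg r, sq_nonneg s]
    apply hx
    rw [← hrs, hr, hs]; simp
  have hBx : B x = (a * r) • e₁ + (b * s) • e₂ := by
    rw [← hrs]
    simp [map_add, map_smul, hBe₁, hBe₂, smul_smul, mul_comm]
  have hBxx : ⟪B x, x⟫ = a * r ^ 2 + b * s ^ 2 := by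
    rw [hBx, ← hrs]
    simp only [inner_add_left, inner_add_right, real_inner_smul_left, real_inner_smul_right,
      he1i, he2i, he₁₂, he₂₁]
    ring
  set μ := rayQuot B x with hμdef
  have hμ : μ = (a * r ^ 2 + b * s ^ 2) / (r ^ 2 + s ^ 2) := by
    rw [hμdef, rayQuot, hBxx, hxx]
  have hres : B x - μ • x = (a * r - μ * r) • e₁ + (b * s - μ * s) • e₂ := by
    rw [hBx, ← hrs]
    simp only [smul_add, smul_smul, sub_smul]
    abel
  have hresn : ‖B x - μ • x‖ ^ 2 = (a * r - μ * r) ^ 2 + (b * s - μ * s) ^ 2 := by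
    rw [← real_inner_self_eq_norm_sq, hres]
    simp only [inner_add_left, inner_add_right, real_inner_smul_left, real_inner_smul_right,
      he1i, he2i, he₁₂, he₂₁]
    ring
  have hxn : ‖x‖ ^ 2 = r ^ 2 + s ^ 2 := by
    rw [← real_inner_self_eq_norm_sq, hxx]
  have hmain : ‖B x - μ • x‖ ^ 2 / ‖x‖ ^ 2 = (a - μ) * (μ - b) := by
    rw [hresn, hxn, hμ]
    field_simp
    ring
  refine ⟨hmain, ?_⟩
  have hxne : ‖x‖ ≠ 0 := by simpa using hx
  rw [resQuot, div_pow, ← hμdef, hmain]
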